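/- In the setting of loopless-SVRG, where each worker updates wᵢ⁺ = x with probability p and wᵢ⁺ = wᵢ with probability 1 − p (independently), and σ² = (1/(nm))∑ᵢ∑ⱼ‖∇f_{ij}(wᵢ) − ∇f_{ij}(x*)‖² with x* a minimizer of f = (1/(nm))∑ᵢ∑ⱼ f_{ij} and each f_{ij} convex and L-smooth, one has E[σ⁺²] ≤ (1 − p)σ² + 2Lp(f(x) − f(x*)). -/

import Mathlib

open Set InnerProductSpace
open scoped RealInnerProductSpace

variable {E : Type*} [NormedAddCommGroup E] [InnerProductSpace ℝ E] [CompleteSpace E]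

lemma aux_hasDerivAt (f : E → ℝ) (x u : E) (t : ℝ) (gu : E)
    (hgrad : HasGradientAt f gu (x + t • u)) :
    HasDerivAt (fun s : ℝ => f (x + s • u)) ⟪gu, u⟫_ℝ t := by
  have h1 : HasDerivAt (fun s : ℝ => x + s • u) u t := by
    simpa using ((hasDerivAt_id t).smul_const u).const_add x
  have h2 : HasFDerivAt f (toDual ℝ E gu) (x + t • u) := hgrad
  have h3 := h2.comp_hasDerivAt t h1
  rw [toDual_apply_apply] at h3
  exact h3

lemma convex_first_order (f : E → ℝ) (gx : E) (x z : E)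
    (hconv : ConvexOn ℝ univ f) (hgrad : HasGradientAt f gx x) :
    f x + ⟪gx, z - x⟫_ℝ ≤ f z := by
  set u := z - x with hu
  have hder : HasDerivAt (fun s : ℝ => f (x + s • u)) ⟪gx, u⟫_ℝ 0 :=
    aux_hasDerivAt f x u 0 gx (by simpa using hgrad)
  have hφ : ConvexOn ℝ univ (fun s : ℝ => f (x + s • u)) := by
    have := hconv.comp_affineMap (AffineMap.lineMap x z)
    simp only [AffineMap.coe_lineMap] at this
    have h2 : (fun s : ℝ => f (x + s • u)) = (f ∘ fun s : ℝ => s • (z - x) + x) := by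
      funext s; simp [u, add_comm]
    rw [h2]
    simpa [preimage_univ] using this
  have := hφ.le_slope_of_hasDerivAt (mem_univ (0:ℝ)) (mem_univ (1:ℝ)) one_pos hder
  simp only [slope, one_smul, zero_smul, add_zero, sub_zero] at this
  simp only [u] at this ⊢
  have hz : x + (z - x) = z := by abel
  rw [hz] at this
  simp only [vsub_eq_sub, inv_one, one_smul, smul_eq_mul] at this
  linarith [this]

lemma descent_lemma (L : ℝ) (hL : 0 < L) (f : E → ℝ) (g : E → E)
    (hgrad : ∀ y, HasGradientAt f (g y) y)
    (hlip : ∀ y z, ‖g y - g z‖ ≤ L * ‖y - z‖) (x z : E) :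
    f z ≤ f x + ⟪g x, z - x⟫_ℝ + L / 2 * ‖z - x‖ ^ 2 := by
  set u := z - x with hu
  have hgc : Continuous g := by
    have hlw : LipschitzWith (Real.toNNReal L) g := by
      apply LipschitzWith.of_dist_le_mul
      intro a b
      simpa [dist_eq_norm, Real.coe_toNNReal L hL.le] using hlip a b
    exact hlw.continuous
  have hcont : Continuous fun t : ℝ => ⟪g (x + t • u), u⟫_ℝ := by
    exact Continuous.inner (hgc.comp (by continuity)) continuous_const
  have hint : ∀ t ∈ Set.uIcc (0:ℝ) 1,
      HasDerivAt (fun s : ℝ => f (x + s • u)) ⟪g (x + t • u), u⟫_ℝ t :=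
    fun t _ => aux_hasDerivAt f x u t _ (hgrad _)
  have heq : f (x + (1:ℝ) • u) - f (x + (0:ℝ) • u)
      = ∫ t in (0:ℝ)..1, ⟪g (x + t • u), u⟫_ℝ :=
    intervalIntegral.integral_eq_sub_of_hasDerivAt hint (hcont.intervalIntegrable 0 1) |>.symm
  have hbound : (∫ t in (0:ℝ)..1, ⟪g (x + t • u), u⟫_ℝ)
      ≤ ∫ t in (0:ℝ)..1, (⟪g x, u⟫_ℝ + L * ‖u‖ ^ 2 * t) := by
    apply intervalIntegral.integral_mono_on zero_le_one (hcont.intervalIntegrable 0 1)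
      ((continuous_const.add (continuous_const.mul (continuous_id'))).intervalIntegrable 0 1)
    intro t ht
    have h1 : ⟪g (x + t • u) - g x, u⟫_ℝ ≤ L * ‖u‖ ^ 2 * t := by
      have hc := real_inner_le_norm (g (x + t • u) - g x) u
      have h2 : ‖g (x + t • u) - g x‖ ≤ L * (t * ‖u‖) := by
        have := hlip (x + t • u) x
        simpa [norm_smul, abs_of_nonneg ht.1] using this
      calc ⟪g (x + t • u) - g x, u⟫_ℝ ≤ ‖g (x + t • u) - g x‖ * ‖u‖ := hc
        _ ≤ (L * (t * ‖u‖)) * ‖u‖ := by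
            apply mul_le_mul_of_nonneg_right h2 (norm_nonneg _)
        _ = L * ‖u‖ ^ 2 * t := by ring
    have h3 : ⟪g (x + t • u), u⟫_ℝ = ⟪g x, u⟫_ℝ + ⟪g (x + t • u) - g x, u⟫_ℝ := by
      rw [← inner_add_left, add_sub_cancel]
    rw [h3]; show _ ≤ ⟪g x, u⟫_ℝ + L * ‖u‖ ^ 2 * t; linarith
  have hval : (∫ t in (0:ℝ)..1, (⟪g x, u⟫_ℝ + L * ‖u‖ ^ 2 * t))
      = ⟪g x, u⟫_ℝ + L * ‖u‖ ^ 2 / 2 := by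
    rw [intervalIntegral.integral_add (intervalIntegrable_const)
      (show IntervalIntegrable (fun t : ℝ => L * ‖u‖ ^ 2 * t) MeasureTheory.volume 0 1 from
        (continuous_const.mul (continuous_id')).intervalIntegrable 0 1),
      intervalIntegral.integral_const_mul, integral_id, intervalIntegral.integral_const]
    simp
    ring
  have hz1 : x + (1:ℝ) • u = z := by simp [hu]
  have hz0 : x + (0:ℝ) • u = x := by simp
  rw [hz1, hz0] at heq
  rw [hval] at hbound
  nlinarith [hbound, heq]

lemma cocoercive (L : ℝ) (hL : 0 < L) (f : E → ℝ) (g : E → E)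
    (hconv : ConvexOn ℝ univ f)
    (hgrad : ∀ y, HasGradientAt f (g y) y)
    (hlip : ∀ y z, ‖g y - g z‖ ≤ L * ‖y - z‖) (x y : E) :
    ‖g x - g y‖ ^ 2 ≤ 2 * L * (f x - f y - ⟪g y, x - y⟫_ℝ) := by
  set h : E → ℝ := fun w => f w - ⟪g y, w⟫_ℝ with hh
  set gh : E → E := fun w => g w - g y with hgh
  have hgradh : ∀ w, HasGradientAt h (gh w) w := by
    intro w
    have h1 : HasFDerivAt f (toDual ℝ E (g w)) w := hgrad w
    have h2 : HasFDerivAt (fun v : E => ⟪g y, v⟫_ℝ) (toDual ℝ E (g y)) w := by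
      have := (toDual ℝ E (g y)).hasFDerivAt (x := w)
      convert this using 1
      funext v
      simp [toDual_apply_apply]
    have h3 := h1.sub h2
    have h4 : HasGradientAt h (gh w) w ↔
        HasFDerivAt h (toDual ℝ E (g w - g y)) w := Iff.rfl
    rw [h4, map_sub]
    exact h3
  have hconvh : ConvexOn ℝ univ h := by
    have hlin : ConcaveOn ℝ univ (fun v : E => ⟪g y, v⟫_ℝ) := by
      have := (innerSL ℝ (g y)).toLinearMap.concaveOn (convex_univ : Convex ℝ (univ : Set E))
      simpa using this
    have := hconv.sub hlin
    simpa [hh, Pi.sub_def] using this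
  have hliph : ∀ a b, ‖gh a - gh b‖ ≤ L * ‖a - b‖ := by
    intro a b
    simpa [hgh, sub_sub_sub_cancel_right] using hlip a b
  have hmin : h y ≤ h (x - (1/L) • gh x) := by
    have := convex_first_order h (gh y) y (x - (1/L) • gh x) hconvh (hgradh y)
    have hz : gh y = 0 := by simp [hgh]
    rw [hz] at this
    simpa using this
  have hd := descent_lemma L hL h gh hgradh hliph x (x - (1/L) • gh x)
  have e1 : (x - (1/L) • gh x) - x = -((1/L) • gh x) := by abel
  rw [e1] at hd
  have e2 : ⟪gh x, -((1/L) • gh x)⟫_ℝ = -((1/L) * ‖gh x‖ ^ 2) := by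
    rw [inner_neg_right, real_inner_smul_right, real_inner_self_eq_norm_sq]
  have e3 : ‖-((1/L) • gh x)‖ ^ 2 = (1/L) ^ 2 * ‖gh x‖ ^ 2 := by
    rw [norm_neg, norm_smul]
    simp [abs_of_nonneg (le_of_lt (by positivity : (0:ℝ) < 1/L)), mul_pow]
  rw [e2, e3] at hd
  have key : h y ≤ h x - 1 / (2 * L) * ‖gh x‖ ^ 2 := by
    have hL' : L ≠ 0 := ne_of_gt hL
    calc h y ≤ h (x - (1/L) • gh x) := hmin
      _ ≤ h x + -(1/L * ‖gh x‖ ^ 2) + L / 2 * ((1/L) ^ 2 * ‖gh x‖ ^ 2) := hd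
      _ = h x - 1 / (2 * L) * ‖gh x‖ ^ 2 := by field_simp; ring
  have hxy : h x - h y = f x - f y - ⟪g y, x - y⟫_ℝ := by
    simp only [hh, inner_sub_right]
    ring
  have : 1 / (2 * L) * ‖gh x‖ ^ 2 ≤ h x - h y := by linarith
  rw [hxy] at this
  have h2L : 0 < 2 * L := by linarith
  calc ‖g x - g y‖ ^ 2 = (2 * L) * (1 / (2 * L) * ‖gh x‖ ^ 2) := by
        field_simp [hgh]; rfl
    _ ≤ 2 * L * (f x - f y - ⟪g y, x - y⟫_ℝ) := by
        apply mul_le_mul_of_nonneg_left this (le_of_lt h2L)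


theorem lsvrg_reference_points_contraction (d n m : ℕ) (hn : 0 < n) (hm : 0 < m)
    (L p : ℝ) (hL : 0 < L) (hp0 : 0 ≤ p) (hp1 : p ≤ 1)
    (f : Fin n → Fin m → EuclideanSpace ℝ (Fin d) → ℝ)
    (g : Fin n → Fin m → EuclideanSpace ℝ (Fin d) → EuclideanSpace ℝ (Fin d))
    (hconv : ∀ i j, ConvexOn ℝ Set.univ (f i j))
    (hgrad : ∀ i j y, HasGradientAt (f i j) (g i j y) y)
    (hlip : ∀ i j y z, ‖g i j y - g i j z‖ ≤ L * ‖y - z‖)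
    (xstar : EuclideanSpace ℝ (Fin d))
    (hmin : ∀ y, (1 / (n * m) : ℝ) * ∑ i, ∑ j, f i j xstar
        ≤ (1 / (n * m) : ℝ) * ∑ i, ∑ j, f i j y)
    (x : EuclideanSpace ℝ (Fin d)) (w : Fin n → EuclideanSpace ℝ (Fin d)) :
    (1 / (n * m) : ℝ) * ∑ i, ∑ j,
        (p * ‖g i j x - g i j xstar‖ ^ 2 + (1 - p) * ‖g i j (w i) - g i j xstar‖ ^ 2)
      ≤ (1 - p) * ((1 / (n * m) : ℝ) * ∑ i, ∑ j, ‖g i j (w i) - g i j xstar‖ ^ 2)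
        + 2 * L * p * ((1 / (n * m) : ℝ) * ∑ i, ∑ j, f i j x
                        - (1 / (n * m) : ℝ) * ∑ i, ∑ j, f i j xstar) := by
  have hn' : (0:ℝ) < n := by exact_mod_cast hn
  have hm' : (0:ℝ) < m := by exact_mod_cast hm
  set c : ℝ := (1 / (n * m) : ℝ) with hc
  have hcpos : 0 < c := by rw [hc]; positivity
  have hSum : ∀ y, (∑ i, ∑ j, f i j xstar) ≤ ∑ i, ∑ j, f i j y := by
    intro y
    exact le_of_mul_le_mul_left (by simpa [hc] using hmin y) hcpos
  set u : EuclideanSpace ℝ (Fin d) := x - xstar with hu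
  -- the directional derivative of the total objective at the minimizer vanishes
  have hD : (∑ i, ∑ j, ⟪g i j xstar, u⟫_ℝ) = 0 := by
    set ψ : ℝ → ℝ := fun t => ∑ i, ∑ j, f i j (xstar + t • u) with hψdef
    have hψ : HasDerivAt ψ (∑ i, ∑ j, ⟪g i j xstar, u⟫_ℝ) 0 := by
      apply HasDerivAt.fun_sum
      intro i _
      apply HasDerivAt.fun_sum
      intro j _
      exact aux_hasDerivAt (f i j) xstar u 0 (g i j xstar) (by simpa using hgrad i j xstar)
    have hloc : IsLocalMin ψ 0 := by
      apply Filter.Eventually.of_forall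
      intro t
      simp only [hψdef, zero_smul, add_zero]
      exact hSum _
    have := hloc.deriv_eq_zero
    rwa [hψ.deriv] at this
  have hA : (∑ i, ∑ j, ‖g i j x - g i j xstar‖ ^ 2)
      ≤ 2 * L * ((∑ i, ∑ j, f i j x) - ∑ i, ∑ j, f i j xstar) := by
    have step : (∑ i, ∑ j, ‖g i j x - g i j xstar‖ ^ 2)
        ≤ ∑ i, ∑ j, (2 * L * (f i j x - f i j xstar - ⟪g i j xstar, u⟫_ℝ)) := by
      apply Finset.sum_le_sum
      intro i _
      apply Finset.sum_le_sum
      intro j _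
      exact cocoercive L hL (f i j) (g i j) (hconv i j) (hgrad i j) (hlip i j) x xstar
    have expand : (∑ i, ∑ j, (2 * L * (f i j x - f i j xstar - ⟪g i j xstar, u⟫_ℝ)))
        = 2 * L * ((∑ i, ∑ j, f i j x) - ∑ i, ∑ j, f i j xstar)
          - 2 * L * (∑ i, ∑ j, ⟪g i j xstar, u⟫_ℝ) := by
      simp only [Finset.mul_sum, Finset.sum_sub_distrib, mul_sub]
    rw [expand, hD] at step
    simpa using step
  -- split the sums
  have hsplit : (∑ i, ∑ j, (p * ‖g i j x - g i j xstar‖ ^ 2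
        + (1 - p) * ‖g i j (w i) - g i j xstar‖ ^ 2))
      = p * (∑ i, ∑ j, ‖g i j x - g i j xstar‖ ^ 2)
        + (1 - p) * (∑ i, ∑ j, ‖g i j (w i) - g i j xstar‖ ^ 2) := by
    simp only [Finset.sum_add_distrib, Finset.mul_sum]
  rw [hsplit]
  have hcp : 0 ≤ c * p := mul_nonneg hcpos.le hp0
  nlinarith [mul_le_mul_of_nonneg_left hA hcp]
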